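/- Let N ≥ 1, let Q be a real symmetric positive definite N×N matrix, let B be a real N×N matrix, let s > 0 and T > 0. Then there exists a constant c ∈ (0,1] (depending only on s, T, Q, B) such that for all t ∈ [0,T] and all ξ ∈ ℝᴺ one has ∫₀ᵗ ‖Q^{1/2} exp(τ Bᵀ) ξ‖^{2s} dτ ≥ c · (t/T) · ∫₀ᵀ ‖Q^{1/2} exp(τ Bᵀ) ξ‖^{2s} dτ. -/

import Mathlib

open MeasureTheory Matrix NormedSpace intervalIntegral
open scoped MatrixOrder

/-- The Euclidean norm of a vector in `ℝᴺ`. -/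
noncomputable def euclNorm {N : ℕ} (x : Fin N → ℝ) : ℝ :=
  Real.sqrt (∑ i, (x i) ^ 2)

lemma euclNorm_nonneg {N : ℕ} (x : Fin N → ℝ) : 0 ≤ euclNorm x := Real.sqrt_nonneg _

lemma continuous_euclNorm {N : ℕ} : Continuous (euclNorm (N := N)) :=
  Real.continuous_sqrt.comp (continuous_finset_sum _ fun i _ => (continuous_apply i).pow 2)

lemma norm_le_euclNorm {N : ℕ} (x : Fin N → ℝ) : ‖x‖ ≤ euclNorm x := by
  rw [pi_norm_le_iff_of_nonneg (euclNorm_nonneg x)]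
  intro i
  rw [Real.norm_eq_abs, ← Real.sqrt_sq_eq_abs]
  exact Real.sqrt_le_sqrt (Finset.single_le_sum (f := fun j => (x j) ^ 2)
    (fun j _ => sq_nonneg _) (Finset.mem_univ i))

lemma euclNorm_le_norm {N : ℕ} (x : Fin N → ℝ) : euclNorm x ≤ Real.sqrt N * ‖x‖ := by
  have h : ∑ i, (x i) ^ 2 ≤ (N : ℝ) * ‖x‖ ^ 2 := by
    calc ∑ i, (x i) ^ 2 ≤ ∑ _i : Fin N, ‖x‖ ^ 2 := by
          refine Finset.sum_le_sum fun i _ => ?_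
          rw [← sq_abs]
          exact pow_le_pow_left₀ (abs_nonneg _) (norm_le_pi_norm x i) 2
      _ = (N : ℝ) * ‖x‖ ^ 2 := by simp [mul_comm]
  calc euclNorm x ≤ Real.sqrt ((N : ℝ) * ‖x‖ ^ 2) := Real.sqrt_le_sqrt h
    _ = Real.sqrt N * ‖x‖ := by
        rw [Real.sqrt_mul (Nat.cast_nonneg N), Real.sqrt_sq (norm_nonneg x)]

/-- `∫₀ᵗ ‖Q^{1/2} e^{τ Bᵀ} ξ‖^{2s} dτ ≥ c (t/T) ∫₀ᵀ ‖Q^{1/2} e^{τ Bᵀ} ξ‖^{2s} dτ`. -/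
theorem stmt1 (N : ℕ) (hN : 1 ≤ N) (Q B : Matrix (Fin N) (Fin N) ℝ)
    (hQ : Q.PosDef) (s T : ℝ) (hs : 0 < s) (hT : 0 < T) :
    ∃ c : ℝ, c ∈ Set.Ioc (0 : ℝ) 1 ∧
      ∀ t ∈ Set.Icc (0 : ℝ) T, ∀ ξ : Fin N → ℝ,
        c * (t / T) * (∫ τ in (0:ℝ)..T,
            euclNorm ((CFC.sqrt Q).mulVec ((NormedSpace.exp (τ • Bᵀ)).mulVec ξ)) ^ (2 * s)) ≤
          ∫ τ in (0:ℝ)..t,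
            euclNorm ((CFC.sqrt Q).mulVec ((NormedSpace.exp (τ • Bᵀ)).mulVec ξ)) ^ (2 * s) := by
  letI : SeminormedRing (Matrix (Fin N) (Fin N) ℝ) := Matrix.linftyOpSemiNormedRing
  letI : NormedRing (Matrix (Fin N) (Fin N) ℝ) := Matrix.linftyOpNormedRing
  letI : NormedAlgebra ℝ (Matrix (Fin N) (Fin N) ℝ) := Matrix.linftyOpNormedAlgebra
  have hs2 : (0:ℝ) < 2 * s := by linarith
  set R : Matrix (Fin N) (Fin N) ℝ := CFC.sqrt Q with hRdef
  -- R is invertible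
  have hRR : R * R = Q := CFC.sqrt_mul_sqrt_self Q hQ.posSemidef.nonneg
  have hdet : IsUnit R.det := by
    have h1 : R.det * R.det = Q.det := by rw [← Matrix.det_mul, hRR]
    have h2 : Q.det ≠ 0 := ne_of_gt hQ.det_pos
    refine isUnit_iff_ne_zero.mpr fun h => h2 ?_
    rw [← h1, h, zero_mul]
  have hinv : R⁻¹ * R = 1 := Matrix.nonsing_inv_mul R hdet
  -- uniform bound on the exponential
  obtain ⟨C₀, hC₀⟩ := (isCompact_Icc (a := -T) (b := T)).exists_bound_of_continuousOn
    (f := fun r : ℝ => NormedSpace.exp (r • Bᵀ))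
    (((continuous_iff_continuousAt.2 fun x => (exp_analytic (𝕂 := ℝ) x).continuousAt).comp (continuous_id.smul continuous_const)).continuousOn)
  set D : ℝ := Real.sqrt N * ‖R‖ * max C₀ 0 * ‖R⁻¹‖ with hDdef
  have hDnn : 0 ≤ D := by positivity
  set K : ℝ := max 1 (D ^ (2 * s)) with hKdef
  have hK1 : (1:ℝ) ≤ K := le_max_left _ _
  have hKpos : (0:ℝ) < K := lt_of_lt_of_le one_pos hK1
  refine ⟨1 / K, ⟨by positivity, by rw [div_le_one hKpos]; exact hK1⟩, ?_⟩
  intro t ht ξ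
  set F : ℝ → ℝ := fun τ => euclNorm (R.mulVec ((NormedSpace.exp (τ • Bᵀ)).mulVec ξ)) ^ (2 * s) with hFdef
  have hFnn : ∀ τ, 0 ≤ F τ := fun τ => Real.rpow_nonneg (euclNorm_nonneg _) _
  have hFc : Continuous F := by
    apply (Real.continuous_rpow_const hs2.le).comp
    exact continuous_euclNorm.comp
      ((continuous_const.matrix_mulVec
        ((((continuous_iff_continuousAt.2 fun x => (exp_analytic (𝕂 := ℝ) x).continuousAt).comp (continuous_id.smul continuous_const))).matrix_mulVec
          continuous_const)))
  -- the key pointwise comparison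
  have key : ∀ τ ∈ Set.Icc (0:ℝ) T, ∀ τ' ∈ Set.Icc (0:ℝ) T, F τ' ≤ K * F τ := by
    intro τ hτ τ' hτ'
    have hmem : τ' - τ ∈ Set.Icc (-T) T :=
      ⟨by linarith [hτ.1, hτ.2, hτ'.1, hτ'.2], by linarith [hτ.1, hτ.2, hτ'.1, hτ'.2]⟩
    have hexp : NormedSpace.exp (τ' • Bᵀ) = NormedSpace.exp ((τ' - τ) • Bᵀ) * NormedSpace.exp (τ • Bᵀ) := by
      have hsum : (τ' - τ) • Bᵀ + τ • Bᵀ = τ' • Bᵀ := by rw [← add_smul]; ring_nf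
      rw [← hsum, Matrix.exp_add_of_commute]
      exact ((Commute.refl Bᵀ).smul_left _).smul_right _
    set w : Fin N → ℝ := (NormedSpace.exp (τ • Bᵀ)).mulVec ξ with hw
    have hsplit : (NormedSpace.exp (τ' • Bᵀ)).mulVec ξ = (NormedSpace.exp ((τ' - τ) • Bᵀ)).mulVec w := by
      rw [hexp, ← Matrix.mulVec_mulVec]
    have hwle : ‖w‖ ≤ ‖R⁻¹‖ * euclNorm (R.mulVec w) := by
      have h1 : w = R⁻¹.mulVec (R.mulVec w) := by
        rw [Matrix.mulVec_mulVec, hinv, Matrix.one_mulVec]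
      calc ‖w‖ = ‖R⁻¹.mulVec (R.mulVec w)‖ := by rw [← h1]
        _ ≤ ‖R⁻¹‖ * ‖R.mulVec w‖ := Matrix.linfty_opNorm_mulVec _ _
        _ ≤ ‖R⁻¹‖ * euclNorm (R.mulVec w) :=
            mul_le_mul_of_nonneg_left (norm_le_euclNorm _) (norm_nonneg _)
    have hchain : euclNorm (R.mulVec ((NormedSpace.exp (τ' • Bᵀ)).mulVec ξ)) ≤ D * euclNorm (R.mulVec w) := by
      rw [hsplit]
      calc euclNorm (R.mulVec ((NormedSpace.exp ((τ' - τ) • Bᵀ)).mulVec w))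
          ≤ Real.sqrt N * ‖R.mulVec ((NormedSpace.exp ((τ' - τ) • Bᵀ)).mulVec w)‖ := euclNorm_le_norm _
        _ ≤ Real.sqrt N * (‖R‖ * ‖(NormedSpace.exp ((τ' - τ) • Bᵀ)).mulVec w‖) :=
            mul_le_mul_of_nonneg_left (Matrix.linfty_opNorm_mulVec _ _) (Real.sqrt_nonneg _)
        _ ≤ Real.sqrt N * (‖R‖ * (‖NormedSpace.exp ((τ' - τ) • Bᵀ)‖ * ‖w‖)) := by
            gcongr
            exact Matrix.linfty_opNorm_mulVec _ _
        _ ≤ Real.sqrt N * (‖R‖ * (max C₀ 0 * (‖R⁻¹‖ * euclNorm (R.mulVec w)))) := by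
            gcongr
            exact le_max_of_le_left (hC₀ _ hmem)
        _ = D * euclNorm (R.mulVec w) := by rw [hDdef]; ring
    calc F τ' ≤ (D * euclNorm (R.mulVec w)) ^ (2 * s) :=
          Real.rpow_le_rpow (euclNorm_nonneg _) hchain hs2.le
      _ = D ^ (2 * s) * (euclNorm (R.mulVec w)) ^ (2 * s) :=
          Real.mul_rpow hDnn (euclNorm_nonneg _)
      _ ≤ K * F τ := by
          refine mul_le_mul (le_max_right _ _) le_rfl ?_ hKpos.le
          exact Real.rpow_nonneg (euclNorm_nonneg _) _
  -- integrability
  have hint : ∀ a b : ℝ, IntervalIntegrable F volume a b := fun a b =>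
    hFc.intervalIntegrable a b
  have htT : t ≤ T := ht.2
  have ht0 : 0 ≤ t := ht.1
  -- step 1 : ∫₀ᵀ F ≤ K * T * F τ for τ ∈ [0, t]
  have step1 : ∀ τ ∈ Set.Icc (0:ℝ) t, (∫ τ' in (0:ℝ)..T, F τ') / (K * T) ≤ F τ := by
    intro τ hτ
    have hτT : τ ∈ Set.Icc (0:ℝ) T := ⟨hτ.1, le_trans hτ.2 htT⟩
    have h1 : (∫ τ' in (0:ℝ)..T, F τ') ≤ ∫ _τ' in (0:ℝ)..T, K * F τ := by
      refine integral_mono_on hT.le (hint 0 T) (intervalIntegrable_const) ?_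
      intro x hx
      exact key τ hτT x hx
    rw [intervalIntegral.integral_const, smul_eq_mul, sub_zero] at h1
    rw [div_le_iff₀ (by positivity)]
    calc (∫ τ' in (0:ℝ)..T, F τ') ≤ T * (K * F τ) := h1
      _ = F τ * (K * T) := by ring
  -- step 2 : integrate the constant lower bound over [0, t]
  have step2 : (∫ _τ in (0:ℝ)..t, (∫ τ' in (0:ℝ)..T, F τ') / (K * T)) ≤ ∫ τ in (0:ℝ)..t, F τ :=
    integral_mono_on ht0 intervalIntegrable_const (hint 0 t) step1
  rw [intervalIntegral.integral_const, smul_eq_mul, sub_zero] at step2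
  calc 1 / K * (t / T) * (∫ τ in (0:ℝ)..T, F τ)
      = t * ((∫ τ' in (0:ℝ)..T, F τ') / (K * T)) := by
        field_simp
    _ ≤ ∫ τ in (0:ℝ)..t, F τ := step2
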